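/- Every self-similar measure on R^d whose attractor is not a single point has positive lower Assouad dimension, and hence is uniformly perfect. -/

import Mathlib

open MeasureTheory Metric Set
open scoped ENNReal

def msupp {X : Type*} [MetricSpace X] [MeasurableSpace X] (μ : Measure X) : Set X :=
  {x | ∀ r > 0, 0 < μ (ball x r)}

def lowerASet {X : Type*} [MetricSpace X] [MeasurableSpace X] (μ : Measure X) : Set ℝ :=
  {s | 0 ≤ s ∧ ∃ c₁ > (0:ℝ), ∃ c₂ > (0:ℝ), ∀ x ∈ msupp μ, ∀ r R : ℝ,
    0 < r → r ≤ R → R ≤ c₁ →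
    c₂ * (R / r) ^ s * (μ (ball x r)).toReal ≤ (μ (ball x R)).toReal}

noncomputable def dimL {X : Type*} [MetricSpace X] [MeasurableSpace X] (μ : Measure X) : ℝ :=
  sSup (lowerASet μ)

namespace SSMaux

variable {E : Type*} {N : ℕ}

/-- apply a word of maps -/
def aw (S : Fin N → E → E) : List (Fin N) → E → E
  | [] => id
  | i :: w => S i ∘ aw S w

@[simp] lemma aw_nil (S : Fin N → E → E) : aw S [] = id := rfl
@[simp] lemma aw_cons (S : Fin N → E → E) (i : Fin N) (w : List (Fin N)) :
    aw S (i :: w) = S i ∘ aw S w := rfl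

/-- product of weights along a word -/
def wp (ρ : Fin N → ℝ) (w : List (Fin N)) : ℝ := (w.map ρ).prod

@[simp] lemma wp_nil (ρ : Fin N → ℝ) : wp ρ [] = 1 := rfl
@[simp] lemma wp_cons (ρ : Fin N → ℝ) (i : Fin N) (w : List (Fin N)) :
    wp ρ (i :: w) = ρ i * wp ρ w := by simp [wp]

lemma wp_pos {ρ : Fin N → ℝ} (h : ∀ i, 0 < ρ i) (w : List (Fin N)) : 0 < wp ρ w := by
  induction w with
  | nil => simp
  | cons i v ih => simp only [wp_cons]; exact mul_pos (h i) ih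

lemma wp_le_one {ρ : Fin N → ℝ} (h0 : ∀ i, 0 < ρ i) (h1 : ∀ i, ρ i ≤ 1) (w : List (Fin N)) :
    wp ρ w ≤ 1 := by
  induction w with
  | nil => simp
  | cons i v ih =>
    simp only [wp_cons]
    calc ρ i * wp ρ v ≤ 1 * 1 := by
          apply mul_le_mul (h1 i) ih (le_of_lt (wp_pos h0 v)) zero_le_one
      _ = 1 := by ring

/-- stopping-time family of words -/
noncomputable def stp (ρ : Fin N → ℝ) : ℕ → ℝ → Finset (List (Fin N))
  | 0, _ => {[]}
  | n+1, t => if 1 ≤ t then {[]} else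
      Finset.univ.biUnion fun i => (stp ρ n (t / ρ i)).image (i :: ·)

lemma stp_zero (ρ : Fin N → ℝ) (t : ℝ) : stp ρ 0 t = {[]} := by rw [stp]

lemma stp_succ (ρ : Fin N → ℝ) (n : ℕ) (t : ℝ) :
    stp ρ (n+1) t = if 1 ≤ t then {[]} else
      Finset.univ.biUnion fun i => (stp ρ n (t / ρ i)).image (i :: ·) := by rw [stp]

lemma stp_of_one_le (ρ : Fin N → ℝ) (n : ℕ) {t : ℝ} (h : 1 ≤ t) : stp ρ n t = {[]} := by
  cases n with
  | zero => rw [stp_zero]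
  | succ n => rw [stp_succ, if_pos h]

lemma mem_stp_succ {ρ : Fin N → ℝ} {n : ℕ} {t : ℝ} (ht : ¬ 1 ≤ t) {w : List (Fin N)} :
    w ∈ stp ρ (n+1) t ↔ ∃ i, ∃ v ∈ stp ρ n (t / ρ i), w = i :: v := by
  rw [stp_succ, if_neg ht]
  simp [eq_comm]


section bounds
variable {ρ : Fin N → ℝ} {ρm ρM : ℝ}

lemma wp_le_pow (h0 : ∀ i, 0 < ρ i) (hM : ∀ i, ρ i ≤ ρM) :
    ∀ w : List (Fin N), wp ρ w ≤ ρM ^ w.length := by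
  intro w
  induction w with
  | nil => simp
  | cons i v ih =>
    simp only [wp_cons, List.length_cons, pow_succ]
    rw [mul_comm (ρM ^ v.length) ρM]
    exact mul_le_mul (hM i) ih (le_of_lt (wp_pos h0 v)) (le_trans (le_of_lt (h0 i)) (hM i))

lemma stp_wp_le (h0 : ∀ i, 0 < ρ i) (hM : ∀ i, ρ i ≤ ρM) (hM0 : 0 < ρM) :
    ∀ n : ℕ, ∀ t : ℝ, ρM ^ n ≤ t → t ≤ 1 → ∀ w ∈ stp ρ n t, wp ρ w ≤ t := by
  intro n
  induction n with
  | zero =>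
    intro t h1 h2 w hw
    rw [stp_zero] at hw
    simp only [Finset.mem_singleton] at hw
    subst hw
    simpa using le_antisymm h2 (by simpa using h1) |>.ge
  | succ n ih =>
    intro t h1 h2 w hw
    by_cases ht : 1 ≤ t
    · rw [stp_of_one_le _ _ ht] at hw
      simp only [Finset.mem_singleton] at hw
      subst hw
      simpa using le_antisymm h2 ht |>.ge
    · rw [mem_stp_succ ht] at hw
      obtain ⟨i, v, hv, rfl⟩ := hw
      by_cases h2' : 1 ≤ t / ρ i
      · rw [stp_of_one_le _ _ h2'] at hv
        simp only [Finset.mem_singleton] at hv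
        subst hv
        simp only [wp_cons, wp_nil, mul_one]
        have := (le_div_iff₀' (h0 i)).mp h2'; linarith
      · have hpre : ρM ^ n ≤ t / ρ i := by
          have ht0 : 0 ≤ t := le_trans (le_of_lt (pow_pos hM0 _)) h1
          have : ρM ^ n * ρ i ≤ t := by
            calc ρM ^ n * ρ i ≤ ρM ^ n * ρM :=
                  mul_le_mul_of_nonneg_left (hM i) (le_of_lt (pow_pos hM0 n))
              _ = ρM ^ (n+1) := by ring
              _ ≤ t := h1
          exact (le_div_iff₀ (h0 i)).mpr this
        have := ih (t / ρ i) hpre (le_of_not_ge h2') v hv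
        simp only [wp_cons]
        calc ρ i * wp ρ v ≤ ρ i * (t / ρ i) :=
              mul_le_mul_of_nonneg_left this (le_of_lt (h0 i))
          _ = t := mul_div_cancel₀ t (ne_of_gt (h0 i))

lemma stp_wp_gt (h0 : ∀ i, 0 < ρ i) (hm : ∀ i, ρm ≤ ρ i) (hm0 : 0 < ρm) (hm1 : ρm < 1)
    (hM : ∀ i, ρ i ≤ ρM) (hM0 : 0 < ρM) :
    ∀ n : ℕ, ∀ t : ℝ, ρM ^ n ≤ t → ∀ w ∈ stp ρ n t, ρm * min t 1 < wp ρ w := by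
  intro n
  induction n with
  | zero =>
    intro t h1 w hw
    rw [stp_zero] at hw
    simp only [Finset.mem_singleton] at hw
    subst hw
    simp only [wp_nil]
    calc ρm * min t 1 ≤ ρm * 1 :=
          mul_le_mul_of_nonneg_left (min_le_right _ _) (le_of_lt hm0)
      _ = ρm := mul_one _
      _ < 1 := hm1
  | succ n ih =>
    intro t h1 w hw
    by_cases ht : 1 ≤ t
    · rw [stp_of_one_le _ _ ht] at hw
      simp only [Finset.mem_singleton] at hw
      subst hw
      simp only [wp_nil]
      calc ρm * min t 1 ≤ ρm * 1 :=
            mul_le_mul_of_nonneg_left (min_le_right _ _) (le_of_lt hm0)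
        _ = ρm := mul_one _
        _ < 1 := hm1
    · have ht1 : t < 1 := lt_of_not_ge ht
      have hmin : min t 1 = t := min_eq_left (le_of_lt ht1)
      rw [mem_stp_succ ht] at hw
      obtain ⟨i, v, hv, rfl⟩ := hw
      by_cases h2' : 1 ≤ t / ρ i
      · rw [stp_of_one_le _ _ h2'] at hv
        simp only [Finset.mem_singleton] at hv
        subst hv
        simp only [wp_cons, wp_nil, mul_one, hmin]
        calc ρm * t < ρm * 1 := by
              have ht0 : 0 < t := lt_of_lt_of_le (pow_pos hM0 _) h1
              exact mul_lt_mul_of_pos_left ht1 hm0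
          _ = ρm := mul_one _
          _ ≤ ρ i := hm i
      · have hpre : ρM ^ n ≤ t / ρ i := by
          have : ρM ^ n * ρ i ≤ t := by
            calc ρM ^ n * ρ i ≤ ρM ^ n * ρM :=
                  mul_le_mul_of_nonneg_left (hM i) (le_of_lt (pow_pos hM0 n))
              _ = ρM ^ (n+1) := by ring
              _ ≤ t := h1
          exact (le_div_iff₀ (h0 i)).mpr this
        have hih := ih (t / ρ i) hpre v hv
        have hmin2 : min (t / ρ i) 1 = t / ρ i := min_eq_left (le_of_not_ge h2')
        rw [hmin2] at hih
        simp only [wp_cons, hmin]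
        calc ρm * t = ρ i * (ρm * (t / ρ i)) := by
              rw [mul_comm (ρ i), mul_assoc, div_mul_cancel₀ _ (ne_of_gt (h0 i))]
          _ < ρ i * wp ρ v := mul_lt_mul_of_pos_left hih (h0 i)

lemma wp_rpow_le (hρ0 : ∀ i, 0 < ρ i) {p : Fin N → ℝ} (hp0 : ∀ i, 0 < p i) (T : ℝ)
    (hT : ∀ i, ρ i ^ T ≤ p i) : ∀ w : List (Fin N), wp ρ w ^ T ≤ wp p w := by
  intro w
  induction w with
  | nil => simp
  | cons i v ih =>
    simp only [wp_cons]
    rw [Real.mul_rpow (le_of_lt (hρ0 i)) (le_of_lt (wp_pos hρ0 v))]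
    exact mul_le_mul (hT i) ih (Real.rpow_nonneg (le_of_lt (wp_pos hρ0 v)) T)
      (le_of_lt (hp0 i))

end bounds


section measure

variable {E : Type*} [MeasurableSpace E] {μ : Measure E}
  {S : Fin N → E → E} {p ρ : Fin N → ℝ} {ρM : ℝ}

lemma self_apply (hmeas : ∀ i, Measurable (S i))
    (hself : μ = ∑ i, ENNReal.ofReal (p i) • μ.map (S i))
    {A : Set E} (hA : MeasurableSet A) :
    μ A = ∑ i, ENNReal.ofReal (p i) * μ (S i ⁻¹' A) := by
  conv_lhs => rw [hself]
  rw [Measure.finset_sum_apply]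
  congr 1
  ext i
  rw [Measure.smul_apply, smul_eq_mul, Measure.map_apply (hmeas i) hA]

lemma word_le (hmeas : ∀ i, Measurable (S i)) (hp0 : ∀ i, 0 < p i)
    (hself : μ = ∑ i, ENNReal.ofReal (p i) • μ.map (S i)) :
    ∀ (w : List (Fin N)) (A : Set E), MeasurableSet A →
      ENNReal.ofReal (wp p w) * μ (aw S w ⁻¹' A) ≤ μ A := by
  intro w
  induction w with
  | nil => intro A _; simp
  | cons i v ih =>
    intro A hA
    have hA' : MeasurableSet (S i ⁻¹' A) := (hmeas i) hA
    have h1 : ENNReal.ofReal (wp p v) * μ (aw S v ⁻¹' (S i ⁻¹' A)) ≤ μ (S i ⁻¹' A) :=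
      ih _ hA'
    have h2 : ENNReal.ofReal (p i) * μ (S i ⁻¹' A) ≤ μ A := by
      rw [self_apply hmeas hself hA]
      exact Finset.single_le_sum (f := fun j => ENNReal.ofReal (p j) * μ (S j ⁻¹' A))
        (fun j _ => zero_le) (Finset.mem_univ i)
    calc ENNReal.ofReal (wp p (i :: v)) * μ (aw S (i :: v) ⁻¹' A)
        = ENNReal.ofReal (p i) * (ENNReal.ofReal (wp p v) * μ (aw S v ⁻¹' (S i ⁻¹' A))) := by
          rw [wp_cons, ENNReal.ofReal_mul (le_of_lt (hp0 i))]
          rw [aw_cons, Set.preimage_comp]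
          ring
      _ ≤ ENNReal.ofReal (p i) * μ (S i ⁻¹' A) :=
          mul_le_mul_right h1 _
      _ ≤ μ A := h2

lemma stp_apply (hmeas : ∀ i, Measurable (S i)) (hp0 : ∀ i, 0 < p i)
    (hρ0 : ∀ i, 0 < ρ i) (hM : ∀ i, ρ i ≤ ρM) (hM0 : 0 < ρM)
    (hself : μ = ∑ i, ENNReal.ofReal (p i) • μ.map (S i)) :
    ∀ (n : ℕ) (t : ℝ), ρM ^ n ≤ t → ∀ A : Set E, MeasurableSet A →
      μ A = ∑ w ∈ stp ρ n t, ENNReal.ofReal (wp p w) * μ (aw S w ⁻¹' A) := by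
  intro n
  induction n with
  | zero =>
    intro t _ A _
    rw [stp_zero, Finset.sum_singleton]
    simp
  | succ n ih =>
    intro t h1 A hA
    by_cases ht : 1 ≤ t
    · rw [stp_of_one_le _ _ ht, Finset.sum_singleton]
      simp
    · rw [stp_succ, if_neg ht]
      have hdisj : ((Finset.univ : Finset (Fin N)) : Set (Fin N)).PairwiseDisjoint
          (fun i => (stp ρ n (t / ρ i)).image (i :: ·)) := by
        intro i _ j _ hij
        simp only [Function.onFun]
        rw [Finset.disjoint_left]
        intro w hwi hwj
        obtain ⟨v, _, rfl⟩ := Finset.mem_image.mp hwi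
        obtain ⟨v', _, h⟩ := Finset.mem_image.mp hwj
        exact hij (List.head_eq_of_cons_eq h.symm ▸ rfl)
      rw [Finset.sum_biUnion hdisj]
      have hterm : ∀ i : Fin N,
          (∑ w ∈ (stp ρ n (t / ρ i)).image (i :: ·),
            ENNReal.ofReal (wp p w) * μ (aw S w ⁻¹' A))
          = ENNReal.ofReal (p i) * μ (S i ⁻¹' A) := by
        intro i
        rw [Finset.sum_image (by intro a _ b _ h; exact (List.cons.injEq _ _ _ _).mp h |>.2)]
        have hpre : ρM ^ n ≤ t / ρ i := by
          have : ρM ^ n * ρ i ≤ t := by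
            calc ρM ^ n * ρ i ≤ ρM ^ n * ρM :=
                  mul_le_mul_of_nonneg_left (hM i) (le_of_lt (pow_pos hM0 n))
              _ = ρM ^ (n+1) := by ring
              _ ≤ t := h1
          exact (le_div_iff₀ (hρ0 i)).mpr this
        rw [ih (t / ρ i) hpre (S i ⁻¹' A) ((hmeas i) hA), Finset.mul_sum]
        congr 1
        ext v
        rw [wp_cons, ENNReal.ofReal_mul (le_of_lt (hp0 i)), aw_cons, Set.preimage_comp]
        ring
      calc μ A = ∑ i, ENNReal.ofReal (p i) * μ (S i ⁻¹' A) := self_apply hmeas hself hA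
        _ = _ := by
            congr 1
            ext i
            rw [hterm i]

end measure

section geo

variable {E : Type*} [MetricSpace E] {S : Fin N → E → E} {ρ : Fin N → ℝ}

lemma aw_dist (hd : ∀ i x y, dist (S i x) (S i y) = ρ i * dist x y) :
    ∀ (w : List (Fin N)) (x y : E), dist (aw S w x) (aw S w y) = wp ρ w * dist x y := by
  intro w
  induction w with
  | nil => intro x y; simp
  | cons i v ih =>
    intro x y
    simp only [aw_cons, Function.comp_apply, wp_cons]
    rw [hd i, ih, mul_assoc]

lemma aw_continuous (hd : ∀ i x y, dist (S i x) (S i y) = ρ i * dist x y)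
    (h0 : ∀ i, 0 < ρ i) : ∀ w : List (Fin N), Continuous (aw S w) := by
  have hc : ∀ i, Continuous (S i) := by
    intro i
    refine (LipschitzWith.of_dist_le_mul (K := Real.toNNReal (ρ i)) ?_).continuous
    intro x y
    rw [hd i, Real.coe_toNNReal _ (le_of_lt (h0 i))]
  intro w
  induction w with
  | nil => exact continuous_id
  | cons i v ih => exact (hc i).comp ih

end geo

section msupp

variable {X : Type*} [MetricSpace X] [MeasurableSpace X]

lemma isClosed_msupp (μ : Measure X) : IsClosed (msupp μ) := by
  rw [← isOpen_compl_iff, Metric.isOpen_iff]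
  intro x hx
  simp only [mem_compl_iff, msupp, mem_setOf_eq] at hx
  push_neg at hx
  obtain ⟨r, hr, hμ⟩ := hx
  refine ⟨r/2, by positivity, ?_⟩
  intro y hy
  simp only [mem_compl_iff, msupp, mem_setOf_eq]
  push_neg
  refine ⟨r/2, by positivity, ?_⟩
  apply le_zero_iff.mpr
  apply measure_mono_null _ (le_zero_iff.mp hμ)
  apply ball_subset_ball'
  rw [mem_ball] at hy
  linarith [hy]

lemma measure_compl_msupp [SecondCountableTopology X] (μ : Measure X) :
    μ (msupp μ)ᶜ = 0 := by
  apply measure_null_of_locally_null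
  intro x hx
  simp only [mem_compl_iff, msupp, mem_setOf_eq] at hx
  push_neg at hx
  obtain ⟨r, hr, hμ⟩ := hx
  exact ⟨ball x r, nhdsWithin_le_nhds (ball_mem_nhds x hr), le_zero_iff.mp hμ⟩

end msupp

end SSMaux

open SSMaux in
set_option maxHeartbeats 1000000 in
theorem SSMkey
    (d N : ℕ) (hN : 2 ≤ N)
    (S : Fin N → EuclideanSpace ℝ (Fin d) → EuclideanSpace ℝ (Fin d))
    (hsim : ∀ i, ∃ r : ℝ, 0 < r ∧ r < 1 ∧ ∀ x y, dist (S i x) (S i y) = r * dist x y)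
    (p : Fin N → ℝ) (hp : ∀ i, 0 < p i) (hsum : ∑ i, p i = 1)
    (μ : Measure (EuclideanSpace ℝ (Fin d))) [IsProbabilityMeasure μ]
    (hself : μ = ∑ i, ENNReal.ofReal (p i) • μ.map (S i))
    (hnondeg : ¬ ∃ x, msupp μ = {x}) :
    ∃ c γ CF T : ℝ, 0 < c ∧ c < 1 ∧ 0 < γ ∧ γ < 1 ∧ 0 < CF ∧ 0 < T ∧
      0 < diam (msupp μ) ∧
      (∀ x ∈ msupp μ, ∀ R : ℝ, 0 < R → R ≤ diam (msupp μ) →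
        μ (ball x (c * R)) ≤ ENNReal.ofReal (1 - γ) * μ (ball x R)) ∧
      (∀ x ∈ msupp μ, ∀ r : ℝ, 0 < r → r ≤ diam (msupp μ) →
        ENNReal.ofReal (CF * r ^ T) ≤ μ (ball x r)) := by
  classical
  choose ρ hρ0 hρ1 hρd using hsim
  haveI hNe : Nonempty (Fin N) := ⟨⟨0, by omega⟩⟩
  -- continuity and measurability
  have hcont : ∀ i, Continuous (S i) := by
    intro i
    have := aw_continuous (S := S) (ρ := ρ) hρd hρ0 [i]
    simpa [aw] using this
  have hmeas : ∀ i, Measurable (S i) := fun i => (hcont i).measurable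
  -- extreme ratios
  have i₀ : Fin N := ⟨0, by omega⟩
  set ρM : ℝ := Finset.univ.sup' Finset.univ_nonempty ρ with hρM_def
  set ρm : ℝ := Finset.univ.inf' Finset.univ_nonempty ρ with hρm_def
  have hMle : ∀ i, ρ i ≤ ρM := fun i => Finset.le_sup' ρ (Finset.mem_univ i)
  have hM1 : ρM < 1 := by
    rw [hρM_def]
    exact (Finset.sup'_lt_iff _).mpr fun i _ => hρ1 i
  have hM0 : 0 < ρM := lt_of_lt_of_le (hρ0 i₀) (hMle i₀)
  have hmle : ∀ i, ρm ≤ ρ i := fun i => Finset.inf'_le ρ (Finset.mem_univ i)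
  have hm0 : 0 < ρm := by
    rw [hρm_def]
    exact (Finset.lt_inf'_iff _).mpr fun i _ => hρ0 i
  have hm1 : ρm < 1 := lt_of_le_of_lt (hmle i₀) (hρ1 i₀)
  have hmM : ρm ≤ ρM := le_trans (hmle i₀) (hMle i₀)
  -- the support
  set K : Set (EuclideanSpace ℝ (Fin d)) := msupp μ with hK_def
  have hKclosed : IsClosed K := isClosed_msupp μ
  have hKmeas : MeasurableSet K := hKclosed.measurableSet
  have hKcompl : μ Kᶜ = 0 := measure_compl_msupp μ
  have hK1 : μ K = 1 := by
    have h := measure_add_measure_compl (μ := μ) hKmeas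
    rw [hKcompl, add_zero, measure_univ] at h
    exact h
  have hKne : K.Nonempty := nonempty_of_measure_ne_zero (by rw [hK1]; exact one_ne_zero)
  -- boundedness of the support
  obtain ⟨b, hbK⟩ := hKne
  set M : ℝ := Finset.univ.sup' Finset.univ_nonempty (fun i => dist (S i b) b) with hM_def
  have hMnn : 0 ≤ M := le_trans dist_nonneg (Finset.le_sup' (fun i => dist (S i b) b) (Finset.mem_univ i₀))
  set M' : ℝ := M / (1 - ρM) with hM'_def
  have hM'nn : 0 ≤ M' := div_nonneg hMnn (by linarith)
  have hdistb : ∀ (w : List (Fin N)) (y : EuclideanSpace ℝ (Fin d)),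
      dist (aw S w y) b ≤ wp ρ w * dist y b + M' := by
    intro w
    induction w with
    | nil => intro y; simp; exact hM'nn
    | cons i v ih =>
      intro y
      have h1 : dist (aw S (i :: v) y) b ≤ ρ i * dist (aw S v y) b + M := by
        calc dist (aw S (i :: v) y) b
            ≤ dist (S i (aw S v y)) (S i b) + dist (S i b) b := dist_triangle _ _ _
          _ = ρ i * dist (aw S v y) b + dist (S i b) b := by rw [hρd i]
          _ ≤ ρ i * dist (aw S v y) b + M := by
              have := Finset.le_sup' (fun j => dist (S j b) b) (Finset.mem_univ i)
              linarith
      have h2 : ρ i * dist (aw S v y) b ≤ ρ i * (wp ρ v * dist y b + M') :=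
        mul_le_mul_of_nonneg_left (ih y) (le_of_lt (hρ0 i))
      have h3 : ρ i * M' + M ≤ M' := by
        have : ρ i * M' ≤ ρM * M' := mul_le_mul_of_nonneg_right (hMle i) hM'nn
        have hM'eq : ρM * M' + M = M' := by
          have h := div_mul_cancel₀ M (show (1:ℝ) - ρM ≠ 0 by linarith)
          rw [hM'_def]
          linear_combination -h
        linarith
      simp only [wp_cons]
      calc dist (aw S (i :: v) y) b ≤ ρ i * (wp ρ v * dist y b + M') + M := by linarith
        _ = ρ i * wp ρ v * dist y b + (ρ i * M' + M) := by ring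
        _ ≤ ρ i * wp ρ v * dist y b + M' := by linarith
  -- μ gives full mass to a fixed closed ball
  have hball1 : μ (closedBall b (M' + 1)) = 1 := by
    have hge : ∀ n : ℕ, μ (closedBall b ((1/ρM) ^ n)) ≤ μ (closedBall b (M' + 1)) := by
      intro n
      have hdecomp := stp_apply hmeas hp hρ0 hMle hM0 hself n (ρM ^ n) le_rfl
      have h1 : μ (closedBall b (M' + 1))
          = ∑ w ∈ stp ρ n (ρM ^ n), ENNReal.ofReal (wp p w) * μ (aw S w ⁻¹' closedBall b (M' + 1)) :=
        hdecomp _ measurableSet_closedBall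
      have h2 : (1 : ℝ≥0∞) = ∑ w ∈ stp ρ n (ρM ^ n), ENNReal.ofReal (wp p w) := by
        have := hdecomp univ MeasurableSet.univ
        simpa [measure_univ] using this
      have hsub : ∀ w ∈ stp ρ n (ρM ^ n),
          closedBall b ((1/ρM) ^ n) ⊆ aw S w ⁻¹' closedBall b (M' + 1) := by
        intro w hw z hz
        have hwle : wp ρ w ≤ ρM ^ n :=
          stp_wp_le hρ0 hMle hM0 n (ρM ^ n) le_rfl (pow_le_one₀ (le_of_lt hM0) (le_of_lt hM1)) w hw
        have hz' : dist z b ≤ (1/ρM) ^ n := by simpa [mem_closedBall] using hz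
        simp only [mem_preimage, mem_closedBall]
        have h3 : wp ρ w * dist z b ≤ ρM ^ n * (1/ρM) ^ n := by
          apply mul_le_mul hwle hz' dist_nonneg (le_of_lt (pow_pos hM0 n))
        have h4 : ρM ^ n * (1/ρM) ^ n = 1 := by
          rw [← mul_pow]
          rw [mul_one_div, div_self (ne_of_gt hM0), one_pow]
        calc dist (aw S w z) b ≤ wp ρ w * dist z b + M' := hdistb w z
          _ ≤ 1 + M' := by rw [← h4]; linarith
          _ = M' + 1 := by ring
      calc μ (closedBall b ((1/ρM) ^ n))
          = 1 * μ (closedBall b ((1/ρM) ^ n)) := (one_mul _).symm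
        _ = ∑ w ∈ stp ρ n (ρM ^ n), ENNReal.ofReal (wp p w) * μ (closedBall b ((1/ρM) ^ n)) := by
            rw [← Finset.sum_mul, ← h2]
        _ ≤ ∑ w ∈ stp ρ n (ρM ^ n), ENNReal.ofReal (wp p w) * μ (aw S w ⁻¹' closedBall b (M' + 1)) := by
            apply Finset.sum_le_sum
            intro w hw
            exact mul_le_mul_right (measure_mono (hsub w hw)) _
        _ = μ (closedBall b (M' + 1)) := h1.symm
    have hmono : Monotone (fun n : ℕ => closedBall b ((1/ρM) ^ n)) := by
      intro n m hnm
      apply closedBall_subset_closedBall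
      apply pow_le_pow_right₀ _ hnm
      rw [le_div_iff₀ hM0]
      linarith
    have hUu : (⋃ n : ℕ, closedBall b ((1/ρM) ^ n)) = univ := by
      apply eq_univ_of_forall
      intro z
      obtain ⟨n, hn⟩ := pow_unbounded_of_one_lt (dist z b) (show (1:ℝ) < 1/ρM by
        rw [lt_div_iff₀ hM0]; linarith)
      exact mem_iUnion.mpr ⟨n, mem_closedBall.mpr (le_of_lt hn)⟩
    have := hmono.measure_iUnion (μ := μ)
    rw [hUu, measure_univ] at this
    apply le_antisymm (prob_le_one)
    rw [this]
    exact iSup_le hge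
  have hKsub : K ⊆ closedBall b (M' + 2) := by
    intro x hx
    by_contra hxout
    have hxm : x ∈ msupp μ := hx
    have h0 : μ (ball x 1) = 0 := by
      have hcompl0 : μ (closedBall b (M' + 1))ᶜ = 0 := by
        rw [measure_compl measurableSet_closedBall (measure_ne_top μ _), hball1, measure_univ]
        simp
      apply measure_mono_null _ hcompl0
      intro y hy
      simp only [mem_compl_iff, mem_closedBall, not_le]
      have h1 := dist_triangle x y b
      have hxy : dist x y < 1 := by rw [dist_comm]; exact mem_ball.mp hy
      have hxb : M' + 2 < dist x b := by
        simpa [mem_closedBall, not_le] using hxout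
      linarith
    have := hxm 1 one_pos
    rw [h0] at this
    exact lt_irrefl 0 this
  have hKbounded : Bornology.IsBounded K :=
    (Metric.isBounded_closedBall).subset hKsub
  have hKcomp : IsCompact K :=
    (isCompact_closedBall b (M' + 2)).of_isClosed_subset hKclosed hKsub
  -- two separated points, diameter
  set D : ℝ := diam K with hD_def
  have hD0 : 0 < D := by
    obtain ⟨a0, ha0, b0, hb0, hab⟩ : ∃ a0 ∈ K, ∃ b0 ∈ K, a0 ≠ b0 := by
      by_contra hcon
      push_neg at hcon
      exact hnondeg ⟨b, Set.eq_singleton_iff_unique_mem.mpr ⟨hbK, fun y hy => hcon y hy b hbK⟩⟩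
    calc (0:ℝ) < dist a0 b0 := dist_pos.mpr hab
      _ ≤ D := dist_le_diam_of_mem hKbounded ha0 hb0
  obtain ⟨a1, ha1, b1, hb1, hab1⟩ : ∃ a1 ∈ K, ∃ b1 ∈ K, D/2 < dist a1 b1 := by
    by_contra hcon
    push_neg at hcon
    have : diam K ≤ D/2 := diam_le_of_forall_dist_le (by linarith) fun x hx y hy => hcon x hx y hy
    rw [← hD_def] at this
    linarith
  -- the uniform gap
  set η : ℝ≥0∞ := min (μ (ball a1 (D/8))) (μ (ball b1 (D/8))) with hη_def
  have hη0 : 0 < η := lt_min (ha1 (D/8) (by linarith)) (hb1 (D/8) (by linarith))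
  have hηtop : η ≠ ∞ := ne_top_of_le_ne_top (measure_ne_top μ _) (min_le_left _ _)
  have hgap : ∀ z : EuclideanSpace ℝ (Fin d), μ (closedBall z (D/8)) + η ≤ 1 := by
    intro z
    have hcase : D/4 < dist z a1 ∨ D/4 < dist z b1 := by
      by_contra hcon
      push_neg at hcon
      have := dist_triangle a1 z b1
      rw [dist_comm a1 z] at this
      linarith [hcon.1, hcon.2]
    rcases hcase with hza | hzb
    · have hdisj : Disjoint (closedBall z (D/8)) (ball a1 (D/8)) := by
        rw [Set.disjoint_left]
        intro y hy1 hy2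
        rw [mem_closedBall] at hy1
        rw [mem_ball] at hy2
        have h := dist_triangle z y a1
        rw [dist_comm z y] at h
        linarith
      calc μ (closedBall z (D/8)) + η ≤ μ (closedBall z (D/8)) + μ (ball a1 (D/8)) :=
            add_le_add_right (min_le_left _ _) _
        _ = μ (closedBall z (D/8) ∪ ball a1 (D/8)) :=
            (measure_union hdisj measurableSet_ball).symm
        _ ≤ 1 := prob_le_one
    · have hdisj : Disjoint (closedBall z (D/8)) (ball b1 (D/8)) := by
        rw [Set.disjoint_left]
        intro y hy1 hy2
        rw [mem_closedBall] at hy1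
        rw [mem_ball] at hy2
        have h := dist_triangle z y b1
        rw [dist_comm z y] at h
        linarith
      calc μ (closedBall z (D/8)) + η ≤ μ (closedBall z (D/8)) + μ (ball b1 (D/8)) :=
            add_le_add_right (min_le_right _ _) _
        _ = μ (closedBall z (D/8) ∪ ball b1 (D/8)) :=
            (measure_union hdisj measurableSet_ball).symm
        _ ≤ 1 := prob_le_one
  have hgap' : ∀ A : Set (EuclideanSpace ℝ (Fin d)),
      (∃ z, A ⊆ closedBall z (D/8)) → μ A + η ≤ 1 := by
    rintro A ⟨z, hz⟩
    calc μ A + η ≤ μ (closedBall z (D/8)) + η := add_le_add_left (measure_mono hz) _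
      _ ≤ 1 := hgap z
  -- the exponent T
  haveI : Nontrivial (Fin N) := Fin.nontrivial_iff_two_le.mpr hN
  have hp1 : ∀ i, p i < 1 := by
    intro i
    obtain ⟨j, hj⟩ := exists_ne i
    have h1 : p i + ∑ j ∈ Finset.univ.erase i, p j = 1 := by
      rw [Finset.add_sum_erase _ _ (Finset.mem_univ i)]
      exact hsum
    have h2 : 0 < ∑ j ∈ Finset.univ.erase i, p j :=
      Finset.sum_pos (fun k _ => hp k) ⟨j, Finset.mem_erase.mpr ⟨hj, Finset.mem_univ j⟩⟩
    linarith
  set T : ℝ := Finset.univ.sup' Finset.univ_nonempty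
      (fun i => Real.log (p i) / Real.log (ρ i)) with hT_def
  have hlogρ : ∀ i, Real.log (ρ i) < 0 := fun i => Real.log_neg (hρ0 i) (hρ1 i)
  have hlogp : ∀ i, Real.log (p i) < 0 := fun i => Real.log_neg (hp i) (hp1 i)
  have hT0 : 0 < T :=
    lt_of_lt_of_le (div_pos_of_neg_of_neg (hlogp i₀) (hlogρ i₀))
      (Finset.le_sup' (fun i => Real.log (p i) / Real.log (ρ i)) (Finset.mem_univ i₀))
  have hTpow : ∀ i, ρ i ^ T ≤ p i := by
    intro i
    rw [← Real.exp_log (hp i), Real.rpow_def_of_pos (hρ0 i)]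
    apply Real.exp_le_exp.mpr
    have hTge : Real.log (p i) / Real.log (ρ i) ≤ T :=
      Finset.le_sup' (fun i => Real.log (p i) / Real.log (ρ i)) (Finset.mem_univ i)
    rw [div_le_iff_of_neg (hlogρ i)] at hTge
    rw [mul_comm]
    exact hTge
  -- coverage of the support by cylinders
  have hcover : ∀ (n : ℕ) (t : ℝ), ρM ^ n ≤ t → ∀ x ∈ K, ∃ w ∈ stp ρ n t, x ∈ aw S w '' K := by
    intro n t ht x hx
    by_contra hcon
    push_neg at hcon
    have hCclosed : IsClosed (⋃ w ∈ (stp ρ n t : Finset (List (Fin N))), aw S w '' K) := by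
      apply Set.Finite.isClosed_biUnion (Finset.finite_toSet _)
      intro w _
      exact (hKcomp.image (aw_continuous hρd hρ0 w)).isClosed
    have hxC : x ∉ ⋃ w ∈ (stp ρ n t : Finset (List (Fin N))), aw S w '' K := by
      intro hmem
      rw [mem_iUnion₂] at hmem
      obtain ⟨w, hw, hxw⟩ := hmem
      exact hcon w hw hxw
    obtain ⟨r, hr0, hrC⟩ :=
      Metric.isOpen_iff.mp (isOpen_compl_iff.mpr hCclosed) x hxC
    have h0 : μ (ball x r) = 0 := by
      rw [stp_apply hmeas hp hρ0 hMle hM0 hself n t ht _ measurableSet_ball]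
      apply Finset.sum_eq_zero
      intro w hw
      have hsub : aw S w ⁻¹' ball x r ⊆ Kᶜ := by
        intro z hz hzK
        have h1 : aw S w z ∈ ⋃ w ∈ (stp ρ n t : Finset (List (Fin N))), aw S w '' K := by
          rw [mem_iUnion₂]
          exact ⟨w, hw, mem_image_of_mem _ hzK⟩
        exact (hrC hz) h1
      rw [measure_mono_null hsub hKcompl, mul_zero]
    have hx' : ∀ r > 0, 0 < μ (ball x r) := hx
    have := hx' r hr0
    rw [h0] at this
    exact lt_irrefl 0 this
  -- fixed small resolution
  obtain ⟨n₀, hn₀⟩ := exists_pow_lt_of_lt_one (show (0:ℝ) < 1/4 by norm_num) hM1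
  set t₀ : ℝ := ρM ^ n₀ with ht₀_def
  have ht₀0 : 0 < t₀ := pow_pos hM0 n₀
  have ht₀14 : t₀ < 1/4 := hn₀
  have ht₀1 : t₀ ≤ 1 := by linarith
  set P : ℝ := (ρm * t₀) ^ T with hP_def
  have hmt0 : 0 < ρm * t₀ := mul_pos hm0 ht₀0
  have hP0 : 0 < P := Real.rpow_pos_of_pos hmt0 T
  have hmt1 : ρm * t₀ < 1 := by
    calc ρm * t₀ ≤ 1 * t₀ := mul_le_mul_of_nonneg_right (le_of_lt hm1) (le_of_lt ht₀0)
      _ = t₀ := one_mul _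
      _ < 1 := by linarith
  have hP1 : P ≤ 1 := Real.rpow_le_one (le_of_lt hmt0) (le_of_lt hmt1) (le_of_lt hT0)
  set aR : ℝ := ρm * t₀ * D / 16 with haR_def
  have haR0 : 0 < aR := by positivity
  have haRD : aR < D/2 := by
    have h2 : ρm * t₀ * D < D := by
      nlinarith [mul_pos (show (0:ℝ) < 1 - ρm*t₀ by linarith) hD0]
    rw [haR_def]
    linarith
  have hdistK : ∀ {x y : EuclideanSpace ℝ (Fin d)}, x ∈ K → y ∈ K → dist x y ≤ D :=
    fun hx hy => dist_le_diam_of_mem hKbounded hx hy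
  -- Lemma U : uniform relative gap at the fixed scale
  have hU : ∀ y ∈ K, μ (closedBall y aR) + ENNReal.ofReal P * η ≤ μ (ball y (D/2)) := by
    intro y hy
    obtain ⟨w, hw, y₀, hy₀K, hyeq⟩ : ∃ w ∈ stp ρ n₀ t₀, ∃ y₀ ∈ K, aw S w y₀ = y := by
      obtain ⟨w, hw, hmem⟩ := hcover n₀ t₀ le_rfl y hy
      obtain ⟨y₀, hy₀, hyeq⟩ := hmem
      exact ⟨w, hw, y₀, hy₀, hyeq⟩
    have hwle : wp ρ w ≤ t₀ := stp_wp_le hρ0 hMle hM0 n₀ t₀ le_rfl ht₀1 w hw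
    have hwgt : ρm * t₀ < wp ρ w := by
      have h := stp_wp_gt hρ0 hmle hm0 hm1 hMle hM0 n₀ t₀ le_rfl w hw
      rwa [min_eq_left ht₀1] at h
    have hw0 : 0 < wp ρ w := wp_pos hρ0 w
    have himg : aw S w '' K ⊆ ball y (D/2) := by
      rintro _ ⟨z₀, hz₀, rfl⟩
      rw [mem_ball, ← hyeq, aw_dist hρd]
      calc wp ρ w * dist z₀ y₀ ≤ t₀ * D :=
            mul_le_mul hwle (hdistK hz₀ hy₀K) dist_nonneg (le_of_lt ht₀0)
        _ < D/2 := by nlinarith [mul_pos (show (0:ℝ) < 1/4 - t₀ by linarith) hD0]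
    have hsmall : μ (aw S w ⁻¹' closedBall y aR) + η ≤ 1 := by
      rcases eq_empty_or_nonempty (aw S w ⁻¹' closedBall y aR) with hBe | ⟨z₀, hz₀⟩
      · rw [hBe, measure_empty, zero_add]
        exact le_trans (le_trans (min_le_left _ _) (measure_mono (subset_univ _))) (le_of_eq measure_univ)
      · apply hgap' _ ⟨z₀, ?_⟩
        intro z hz
        rw [mem_closedBall]
        have hz' : dist (aw S w z) y ≤ aR := mem_closedBall.mp hz
        have hz₀' : dist (aw S w z₀) y ≤ aR := mem_closedBall.mp hz₀
        have h1 : wp ρ w * dist z z₀ ≤ 2 * aR := by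
          rw [← aw_dist hρd]
          calc dist (aw S w z) (aw S w z₀)
              ≤ dist (aw S w z) y + dist (aw S w z₀) y := dist_triangle_right _ _ _
            _ ≤ 2 * aR := by linarith
        have h2 : ρm * t₀ * dist z z₀ ≤ 2 * aR := by
          calc ρm * t₀ * dist z z₀ ≤ wp ρ w * dist z z₀ :=
                mul_le_mul_of_nonneg_right (le_of_lt hwgt) dist_nonneg
            _ ≤ 2 * aR := h1
        rw [haR_def] at h2
        rw [← le_div_iff₀' hmt0] at h2
        calc dist z z₀ ≤ 2 * (ρm * t₀ * D / 16) / (ρm * t₀) := h2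
          _ = (ρm * t₀) * (D/8) / (ρm * t₀) := by ring_nf
          _ = D/8 := mul_div_cancel_left₀ _ (ne_of_gt hmt0)
    have hKB : η ≤ μ (K \ aw S w ⁻¹' closedBall y aR) := by
      have h1 : (1:ℝ≥0∞) ≤ μ (K \ aw S w ⁻¹' closedBall y aR) + μ (aw S w ⁻¹' closedBall y aR) := by
        rw [← hK1]
        calc μ K ≤ μ ((K \ aw S w ⁻¹' closedBall y aR) ∪ aw S w ⁻¹' closedBall y aR) := by
              apply measure_mono
              intro z hz
              by_cases hzB : z ∈ aw S w ⁻¹' closedBall y aR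
              · exact Or.inr hzB
              · exact Or.inl ⟨hz, hzB⟩
          _ ≤ _ := measure_union_le _ _
      have h2 : μ (aw S w ⁻¹' closedBall y aR) + η
          ≤ μ (aw S w ⁻¹' closedBall y aR) + μ (K \ aw S w ⁻¹' closedBall y aR) := by
        calc μ (aw S w ⁻¹' closedBall y aR) + η ≤ 1 := hsmall
          _ ≤ _ := by rw [add_comm] at h1; exact h1
      exact (ENNReal.add_le_add_iff_left (measure_ne_top μ _)).mp h2
    have hPw : ENNReal.ofReal P ≤ ENNReal.ofReal (wp p w) := by
      apply ENNReal.ofReal_le_ofReal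
      calc P ≤ (wp ρ w) ^ T := Real.rpow_le_rpow (le_of_lt hmt0) (le_of_lt hwgt) (le_of_lt hT0)
        _ ≤ wp p w := wp_rpow_le hρ0 hp T hTpow w
    have hA2meas : MeasurableSet ((aw S w '' K) \ closedBall y aR) :=
      ((hKcomp.image (aw_continuous hρd hρ0 w)).isClosed.measurableSet).diff
        measurableSet_closedBall
    have hA2low : ENNReal.ofReal P * η ≤ μ ((aw S w '' K) \ closedBall y aR) := by
      calc ENNReal.ofReal P * η ≤ ENNReal.ofReal (wp p w) * μ (K \ aw S w ⁻¹' closedBall y aR) :=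
            mul_le_mul' hPw hKB
        _ ≤ ENNReal.ofReal (wp p w) * μ (aw S w ⁻¹' ((aw S w '' K) \ closedBall y aR)) := by
            apply mul_le_mul_right
            apply measure_mono
            rintro z ⟨hzK, hzB⟩
            exact ⟨mem_image_of_mem _ hzK, hzB⟩
        _ ≤ μ ((aw S w '' K) \ closedBall y aR) := word_le hmeas hp hself w _ hA2meas
    calc μ (closedBall y aR) + ENNReal.ofReal P * η
        ≤ μ (closedBall y aR) + μ ((aw S w '' K) \ closedBall y aR) := add_le_add_right hA2low _
      _ = μ (closedBall y aR ∪ (aw S w '' K) \ closedBall y aR) :=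
          (measure_union disjoint_sdiff_self_right hA2meas).symm
      _ ≤ μ (ball y (D/2)) := by
          apply measure_mono
          apply union_subset (closedBall_subset_ball haRD)
          exact fun z hz => himg hz.1
  -- the relative gap constant γ
  set γ : ℝ := (ENNReal.ofReal P * η).toReal with hγ_def
  have hPηtop : ENNReal.ofReal P * η ≠ ∞ := ENNReal.mul_ne_top ENNReal.ofReal_ne_top hηtop
  have hγ0 : 0 < γ := ENNReal.toReal_pos
    (mul_ne_zero (ne_of_gt (ENNReal.ofReal_pos.mpr hP0)) (ne_of_gt hη0)) hPηtop
  have hγeq : ENNReal.ofReal γ = ENNReal.ofReal P * η := ENNReal.ofReal_toReal hPηtop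
  have hγleague : ENNReal.ofReal P * η ≤ η := by
    calc ENNReal.ofReal P * η ≤ 1 * η :=
          mul_le_mul_left (ENNReal.ofReal_le_one.mpr hP1) η
      _ = η := one_mul η
  have hη1 : η + η ≤ 1 := by
    calc η + η ≤ μ (closedBall b1 (D/8)) + η := by
          apply add_le_add_left
          exact le_trans (min_le_right _ _) (measure_mono ball_subset_closedBall)
      _ ≤ 1 := hgap b1
  have hγ1 : γ < 1 := by
    have h1 : ENNReal.ofReal P * η ≤ η := hγleague
    have h2 : γ ≤ η.toReal := ENNReal.toReal_mono hηtop h1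
    have h3 : η.toReal + η.toReal ≤ 1 := by
      have := ENNReal.toReal_mono (by norm_num : (1:ℝ≥0∞) ≠ ∞) hη1
      rwa [ENNReal.toReal_add hηtop hηtop, ENNReal.toReal_one] at this
    linarith
  -- multiplicative form of the gap
  have hUγ : ∀ y ∈ K, μ (closedBall y aR) ≤ ENNReal.ofReal (1 - γ) * μ (ball y (D/2)) := by
    intro y hy
    have h0 := hU y hy
    rw [← hγeq] at h0
    have hmtop : μ (ball y (D/2)) ≠ ∞ := measure_ne_top μ _
    have hcbtop : μ (closedBall y aR) ≠ ∞ := measure_ne_top μ _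
    have h1 : (μ (closedBall y aR)).toReal + γ ≤ (μ (ball y (D/2))).toReal := by
      have := ENNReal.toReal_mono hmtop h0
      rwa [ENNReal.toReal_add hcbtop ENNReal.ofReal_ne_top,
        ENNReal.toReal_ofReal (le_of_lt hγ0)] at this
    have hm1' : (μ (ball y (D/2))).toReal ≤ 1 := by
      have := ENNReal.toReal_mono (by norm_num : (1:ℝ≥0∞) ≠ ∞) (prob_le_one (μ := μ) (s := ball y (D/2)))
      rwa [ENNReal.toReal_one] at this
    have h2 : (μ (closedBall y aR)).toReal ≤ (1 - γ) * (μ (ball y (D/2))).toReal := by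
      have h3 : γ * (μ (ball y (D/2))).toReal ≤ γ :=
        mul_le_of_le_one_right (le_of_lt hγ0) hm1'
      nlinarith
    calc μ (closedBall y aR) = ENNReal.ofReal ((μ (closedBall y aR)).toReal) :=
          (ENNReal.ofReal_toReal hcbtop).symm
      _ ≤ ENNReal.ofReal ((1 - γ) * (μ (ball y (D/2))).toReal) := ENNReal.ofReal_le_ofReal h2
      _ = ENNReal.ofReal (1 - γ) * ENNReal.ofReal ((μ (ball y (D/2))).toReal) :=
          ENNReal.ofReal_mul (by linarith)
      _ = ENNReal.ofReal (1 - γ) * μ (ball y (D/2)) := by rw [ENNReal.ofReal_toReal hmtop]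
  -- the annulus constant c
  set c : ℝ := min (ρm * aR / (2*D)) (1/2) with hc_def
  have hc0 : 0 < c := lt_min (by positivity) (by norm_num)
  have hc12 : c ≤ 1/2 := min_le_right _ _
  have hc1 : c < 1 := lt_of_le_of_lt hc12 (by norm_num)
  have hc' : c * (2*D) ≤ ρm * aR := by
    have h1 : c ≤ ρm * aR / (2*D) := min_le_left _ _
    rwa [le_div_iff₀ (by positivity)] at h1
  -- main annulus estimate
  have hAnn : ∀ x ∈ K, ∀ R : ℝ, 0 < R → R ≤ D →
      μ (ball x (c * R)) ≤ ENNReal.ofReal (1 - γ) * μ (ball x R) := by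
    intro x hx R hR0 hRD
    set t : ℝ := R / D with ht_def
    have ht0 : 0 < t := div_pos hR0 hD0
    have ht1 : t ≤ 1 := (div_le_one hD0).mpr hRD
    have hRt : R = t * D := by rw [ht_def, div_mul_cancel₀ _ (ne_of_gt hD0)]
    obtain ⟨n, hn⟩ := exists_pow_lt_of_lt_one ht0 hM1
    have hn' : ρM ^ n ≤ t := le_of_lt hn
    rw [stp_apply hmeas hp hρ0 hMle hM0 hself n t hn' _ measurableSet_ball,
      stp_apply hmeas hp hρ0 hMle hM0 hself n t hn' (ball x R) measurableSet_ball]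
    have hterm : ∀ w ∈ stp ρ n t,
        ENNReal.ofReal (wp p w) * μ (aw S w ⁻¹' ball x (c*R))
        ≤ ENNReal.ofReal (1-γ) * (ENNReal.ofReal (wp p w) * μ (aw S w ⁻¹' ball x R)) := by
      intro w hw
      rcases eq_empty_or_nonempty (aw S w ⁻¹' ball x (c*R) ∩ K) with hKe | ⟨y₀, hy₀pre, hy₀K⟩
      · have hsub : aw S w ⁻¹' ball x (c*R) ⊆ Kᶜ := by
          rw [Set.subset_compl_iff_disjoint_right]
          exact Set.disjoint_iff_inter_eq_empty.mpr hKe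
        rw [measure_mono_null hsub hKcompl, mul_zero]
        exact zero_le
      · have hwle : wp ρ w ≤ t := stp_wp_le hρ0 hMle hM0 n t hn' ht1 w hw
        have hwgt : ρm * t < wp ρ w := by
          have h := stp_wp_gt hρ0 hmle hm0 hm1 hMle hM0 n t hn' w hw
          rwa [min_eq_left ht1] at h
        have hw0 : 0 < wp ρ w := wp_pos hρ0 w
        have hy₀b : dist (aw S w y₀) x < c*R := mem_ball.mp hy₀pre
        have hsub1 : aw S w ⁻¹' ball x (c*R) ⊆ closedBall y₀ aR := by
          intro z hz
          rw [mem_closedBall]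
          have hzb : dist (aw S w z) x < c*R := mem_ball.mp hz
          have h2 : ρm * t * dist z y₀ ≤ 2*(c*R) := by
            have h1 : wp ρ w * dist z y₀ ≤ 2*(c*R) := by
              rw [← aw_dist hρd]
              calc dist (aw S w z) (aw S w y₀)
                  ≤ dist (aw S w z) x + dist (aw S w y₀) x := dist_triangle_right _ _ _
                _ ≤ 2*(c*R) := by linarith
            calc ρm * t * dist z y₀ ≤ wp ρ w * dist z y₀ :=
                  mul_le_mul_of_nonneg_right (le_of_lt hwgt) dist_nonneg
              _ ≤ 2*(c*R) := h1
          have h5 : (ρm * t) * dist z y₀ ≤ (ρm * t) * aR := by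
            calc (ρm * t) * dist z y₀ ≤ 2*(c*R) := by linarith [h2]
              _ = c*(2*D)*t := by rw [hRt]; ring
              _ ≤ ρm * aR * t := mul_le_mul_of_nonneg_right hc' (le_of_lt ht0)
              _ = (ρm * t) * aR := by ring
          exact le_of_mul_le_mul_left h5 (mul_pos hm0 ht0)
        have hsub2 : ball y₀ (D/2) ⊆ aw S w ⁻¹' ball x R := by
          intro z hz
          rw [mem_preimage, mem_ball]
          have hdz : dist z y₀ < D/2 := mem_ball.mp hz
          have e1 : dist (aw S w z) x ≤ wp ρ w * dist z y₀ + dist (aw S w y₀) x := by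
            calc dist (aw S w z) x
                ≤ dist (aw S w z) (aw S w y₀) + dist (aw S w y₀) x := dist_triangle _ _ _
              _ = wp ρ w * dist z y₀ + dist (aw S w y₀) x := by rw [aw_dist hρd]
          have e2 : wp ρ w * dist z y₀ ≤ t * (D/2) := by
            calc wp ρ w * dist z y₀ ≤ wp ρ w * (D/2) :=
                  mul_le_mul_of_nonneg_left (le_of_lt hdz) (le_of_lt hw0)
              _ ≤ t * (D/2) := mul_le_mul_of_nonneg_right hwle (by linarith)
          have e3 : t * (D/2) = R/2 := by rw [hRt]; ring
          have e4 : c*R ≤ R/2 := by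
            calc c*R ≤ (1/2)*R := mul_le_mul_of_nonneg_right hc12 (le_of_lt hR0)
              _ = R/2 := by ring
          linarith
        calc ENNReal.ofReal (wp p w) * μ (aw S w ⁻¹' ball x (c*R))
            ≤ ENNReal.ofReal (wp p w) * μ (closedBall y₀ aR) :=
              mul_le_mul_right (measure_mono hsub1) _
          _ ≤ ENNReal.ofReal (wp p w) * (ENNReal.ofReal (1-γ) * μ (ball y₀ (D/2))) :=
              mul_le_mul_right (hUγ y₀ hy₀K) _
          _ ≤ ENNReal.ofReal (wp p w) * (ENNReal.ofReal (1-γ) * μ (aw S w ⁻¹' ball x R)) :=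
              mul_le_mul_right (mul_le_mul_right (measure_mono hsub2) _) _
          _ = ENNReal.ofReal (1-γ) * (ENNReal.ofReal (wp p w) * μ (aw S w ⁻¹' ball x R)) := by
              ring
    calc ∑ w ∈ stp ρ n t, ENNReal.ofReal (wp p w) * μ (aw S w ⁻¹' ball x (c*R))
        ≤ ∑ w ∈ stp ρ n t,
            ENNReal.ofReal (1-γ) * (ENNReal.ofReal (wp p w) * μ (aw S w ⁻¹' ball x R)) :=
          Finset.sum_le_sum hterm
      _ = ENNReal.ofReal (1-γ) * ∑ w ∈ stp ρ n t,
            ENNReal.ofReal (wp p w) * μ (aw S w ⁻¹' ball x R) := by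
          rw [Finset.mul_sum]
  -- the Frostman-type lower bound
  set CF : ℝ := (ρm / (2*D)) ^ T with hCF_def
  have hCF0 : 0 < CF := Real.rpow_pos_of_pos (by positivity) T
  have hFro : ∀ x ∈ K, ∀ r : ℝ, 0 < r → r ≤ D →
      ENNReal.ofReal (CF * r ^ T) ≤ μ (ball x r) := by
    intro x hx r hr0 hrD
    set t : ℝ := r / (2*D) with ht_def
    have ht0 : 0 < t := by positivity
    have ht1 : t ≤ 1 := by
      rw [ht_def, div_le_one (by positivity)]
      linarith
    obtain ⟨n, hn⟩ := exists_pow_lt_of_lt_one ht0 hM1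
    have hn' : ρM ^ n ≤ t := le_of_lt hn
    obtain ⟨w, hw, x₀, hx₀K, hxeq⟩ : ∃ w ∈ stp ρ n t, ∃ x₀ ∈ K, aw S w x₀ = x := by
      obtain ⟨w, hw, hmem⟩ := hcover n t hn' x hx
      obtain ⟨x₀, hx₀, hxeq⟩ := hmem
      exact ⟨w, hw, x₀, hx₀, hxeq⟩
    have hwle : wp ρ w ≤ t := stp_wp_le hρ0 hMle hM0 n t hn' ht1 w hw
    have hwgt : ρm * t < wp ρ w := by
      have h := stp_wp_gt hρ0 hmle hm0 hm1 hMle hM0 n t hn' w hw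
      rwa [min_eq_left ht1] at h
    have htD : t * D = r/2 := by
      rw [ht_def]
      field_simp
    have himg : aw S w '' K ⊆ ball x r := by
      rintro _ ⟨z₀, hz₀, rfl⟩
      rw [mem_ball, ← hxeq, aw_dist hρd]
      calc wp ρ w * dist z₀ x₀ ≤ t * D :=
            mul_le_mul hwle (hdistK hz₀ hx₀K) dist_nonneg (le_of_lt ht0)
        _ = r/2 := htD
        _ < r := by linarith
    have himgmeas : MeasurableSet (aw S w '' K) :=
      (hKcomp.image (aw_continuous hρd hρ0 w)).isClosed.measurableSet
    have hμ1 : ENNReal.ofReal (wp p w) ≤ μ (ball x r) := by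
      calc ENNReal.ofReal (wp p w) = ENNReal.ofReal (wp p w) * μ K := by rw [hK1, mul_one]
        _ ≤ ENNReal.ofReal (wp p w) * μ (aw S w ⁻¹' (aw S w '' K)) :=
            mul_le_mul_right (measure_mono (subset_preimage_image _ _)) _
        _ ≤ μ (aw S w '' K) := word_le hmeas hp hself w _ himgmeas
        _ ≤ μ (ball x r) := measure_mono himg
    have hwp : CF * r ^ T ≤ wp p w := by
      have hstep : CF * r ^ T = (ρm * t) ^ T := by
        rw [hCF_def, ← Real.mul_rpow (by positivity) (le_of_lt hr0)]
        congr 1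
        rw [ht_def]
        ring
      rw [hstep]
      calc (ρm * t) ^ T ≤ (wp ρ w) ^ T :=
            Real.rpow_le_rpow (le_of_lt (mul_pos hm0 ht0)) (le_of_lt hwgt) (le_of_lt hT0)
        _ ≤ wp p w := wp_rpow_le hρ0 hp T hTpow w
    exact le_trans (ENNReal.ofReal_le_ofReal hwp) hμ1
  exact ⟨c, γ, CF, T, hc0, hc1, hγ0, hγ1, hCF0, hT0, hD0, hAnn, hFro⟩

set_option maxHeartbeats 1000000 in
theorem self_similar_measure_positive_lower_dim
    (d N : ℕ) (hN : 2 ≤ N)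
    (S : Fin N → EuclideanSpace ℝ (Fin d) → EuclideanSpace ℝ (Fin d))
    (hsim : ∀ i, ∃ r : ℝ, 0 < r ∧ r < 1 ∧ ∀ x y, dist (S i x) (S i y) = r * dist x y)
    (p : Fin N → ℝ) (hp : ∀ i, 0 < p i) (hsum : ∑ i, p i = 1)
    (μ : Measure (EuclideanSpace ℝ (Fin d))) [IsProbabilityMeasure μ]
    (hself : μ = ∑ i, ENNReal.ofReal (p i) • μ.map (S i))
    (hnondeg : ¬ ∃ x, msupp μ = {x}) :
    0 < dimL μ ∧
    ∃ c γ : ℝ, 0 < c ∧ c < 1 ∧ 0 < γ ∧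
      ∀ x ∈ msupp μ, ∀ R : ℝ, 0 < R → R ≤ diam (msupp μ) →
        ENNReal.ofReal γ * μ (ball x R) ≤ μ (ball x R \ ball x (c * R)) := by
  classical
  obtain ⟨c, γ, CF, T, hc0, hc1, hγ0, hγ1, hCF0, hT0, hD0, hAnn, hFro⟩ :=
    SSMkey d N hN S hsim p hp hsum μ hself hnondeg
  set D : ℝ := diam (msupp μ) with hD_def
  have hγ1' : 0 < 1 - γ := by linarith
  -- iteration of the annulus estimate
  have hiter : ∀ x ∈ msupp μ, ∀ R : ℝ, 0 < R → R ≤ D → ∀ k : ℕ,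
      μ (ball x (c ^ k * R)) ≤ ENNReal.ofReal (1-γ) ^ k * μ (ball x R) := by
    intro x hx R hR0 hRD k
    induction k with
    | zero => simp
    | succ k ih =>
      have hck0 : 0 < c ^ k * R := by positivity
      have hckD : c ^ k * R ≤ D := by
        have h1 : c ^ k ≤ 1 := pow_le_one₀ (le_of_lt hc0) (le_of_lt hc1)
        nlinarith
      calc μ (ball x (c ^ (k+1) * R)) = μ (ball x (c * (c ^ k * R))) := by
            rw [pow_succ]
            ring_nf
        _ ≤ ENNReal.ofReal (1-γ) * μ (ball x (c ^ k * R)) := hAnn x hx _ hck0 hckD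
        _ ≤ ENNReal.ofReal (1-γ) * (ENNReal.ofReal (1-γ) ^ k * μ (ball x R)) :=
            mul_le_mul_right ih _
        _ = ENNReal.ofReal (1-γ) ^ (k+1) * μ (ball x R) := by
            rw [pow_succ]
            ring
  -- a positive element of the lower Assouad set
  set s : ℝ := Real.log (1-γ) / Real.log c with hs_def
  have hlogc : Real.log c < 0 := Real.log_neg hc0 hc1
  have hlog1γ : Real.log (1-γ) < 0 := Real.log_neg hγ1' (by linarith)
  have hs0 : 0 < s := div_pos_of_neg_of_neg hlog1γ hlogc
  have hcs : c ^ s = 1 - γ := by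
    rw [Real.rpow_def_of_pos hc0, hs_def, mul_comm,
      div_mul_cancel₀ _ (ne_of_lt hlogc), Real.exp_log hγ1']
  have hmem : s ∈ lowerASet μ := by
    refine ⟨le_of_lt hs0, D, hD0, 1-γ, hγ1', ?_⟩
    intro x hx r R hr0 hrR hRD
    have hR0 : 0 < R := lt_of_lt_of_le hr0 hrR
    obtain ⟨k, hk1, hk2⟩ : ∃ k : ℕ, r ≤ c ^ k * R ∧ c ^ (k+1) * R < r := by
      have hex : ∃ j : ℕ, c ^ (j+1) * R < r := by
        obtain ⟨m, hm⟩ := exists_pow_lt_of_lt_one (div_pos hr0 hR0) hc1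
        refine ⟨m, ?_⟩
        have h1 : c ^ (m+1) ≤ c ^ m := pow_le_pow_of_le_one (le_of_lt hc0) (le_of_lt hc1) (by omega)
        calc c ^ (m+1) * R ≤ c ^ m * R := mul_le_mul_of_nonneg_right h1 (le_of_lt hR0)
          _ < (r/R) * R := mul_lt_mul_of_pos_right hm hR0
          _ = r := div_mul_cancel₀ _ (ne_of_gt hR0)
      refine ⟨Nat.find hex, ?_, Nat.find_spec hex⟩
      rcases Nat.eq_zero_or_pos (Nat.find hex) with h0 | hpos
      · rw [h0]
        simpa using hrR
      · obtain ⟨k', hk'⟩ : ∃ k', Nat.find hex = k' + 1 := ⟨Nat.find hex - 1, by omega⟩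
        rw [hk']
        have := Nat.find_min hex (m := k') (by omega)
        push_neg at this
        exact this
    have h1 : μ (ball x r) ≤ ENNReal.ofReal (1-γ) ^ k * μ (ball x R) := by
      calc μ (ball x r) ≤ μ (ball x (c ^ k * R)) := measure_mono (ball_subset_ball hk1)
        _ ≤ _ := hiter x hx R hR0 hRD k
    have h2 : (μ (ball x r)).toReal ≤ (1-γ) ^ k * (μ (ball x R)).toReal := by
      have h2' := ENNReal.toReal_mono
        (ENNReal.mul_ne_top (ENNReal.pow_ne_top ENNReal.ofReal_ne_top) (measure_ne_top μ _)) h1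
      rwa [ENNReal.toReal_mul, ← ENNReal.ofReal_pow (by linarith),
        ENNReal.toReal_ofReal (by positivity)] at h2'
    have hck10 : 0 < c ^ (k+1) := pow_pos hc0 _
    have hlt : R / r < (c ^ (k+1))⁻¹ := by
      rw [div_lt_iff₀ hr0, inv_mul_eq_div, lt_div_iff₀ hck10]
      calc R * c ^ (k+1) = c ^ (k+1) * R := mul_comm _ _
        _ < r := hk2
    have hkey : (R/r) ^ s ≤ ((1-γ) ^ (k+1))⁻¹ := by
      have h3 : (R/r) ^ s ≤ ((c ^ (k+1))⁻¹) ^ s :=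
        Real.rpow_le_rpow (by positivity) (le_of_lt hlt) (le_of_lt hs0)
      have h4 : ((c ^ (k+1))⁻¹ : ℝ) ^ s = ((1-γ) ^ (k+1))⁻¹ := by
        rw [Real.inv_rpow (pow_nonneg (le_of_lt hc0) _)]
        congr 1
        rw [← Real.rpow_natCast c (k+1), ← Real.rpow_mul (le_of_lt hc0),
          mul_comm (((k+1:ℕ)):ℝ) s, Real.rpow_mul (le_of_lt hc0), Real.rpow_natCast, hcs]
      rw [h4] at h3
      exact h3
    have hpow0 : 0 < (1-γ) ^ (k+1) := pow_pos hγ1' _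
    have hfin : (1-γ) * (R/r) ^ s * (1-γ) ^ k ≤ 1 := by
      have hRr0 : (0:ℝ) ≤ (R/r) ^ s := Real.rpow_nonneg (by positivity) s
      calc (1-γ) * (R/r) ^ s * (1-γ) ^ k
          ≤ (1-γ) * ((1-γ) ^ (k+1))⁻¹ * (1-γ) ^ k := by
            apply mul_le_mul_of_nonneg_right _ (pow_nonneg (by linarith) k)
            exact mul_le_mul_of_nonneg_left hkey (by linarith)
        _ = ((1-γ) * (1-γ) ^ k) * ((1-γ) ^ (k+1))⁻¹ := by ring
        _ = (1-γ) ^ (k+1) * ((1-γ) ^ (k+1))⁻¹ := by rw [← pow_succ']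
        _ = 1 := mul_inv_cancel₀ (ne_of_gt hpow0)
    have hRr0' : (0:ℝ) ≤ (1-γ) * (R/r) ^ s :=
      mul_nonneg (by linarith) (Real.rpow_nonneg (by positivity) s)
    calc (1-γ) * (R/r) ^ s * (μ (ball x r)).toReal
        ≤ (1-γ) * (R/r) ^ s * ((1-γ) ^ k * (μ (ball x R)).toReal) :=
          mul_le_mul_of_nonneg_left h2 hRr0'
      _ = ((1-γ) * (R/r) ^ s * (1-γ) ^ k) * (μ (ball x R)).toReal := by ring
      _ ≤ 1 * (μ (ball x R)).toReal :=
          mul_le_mul_of_nonneg_right hfin ENNReal.toReal_nonneg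
      _ = (μ (ball x R)).toReal := one_mul _
  -- upper bound for the lower Assouad set
  have hub : ∀ s' ∈ lowerASet μ, s' ≤ T := by
    rintro s' ⟨hs'0, c₁, hc₁, c₂, hc₂, hs'⟩
    by_contra hgt
    push_neg at hgt
    obtain ⟨x₀, hx₀⟩ : (msupp μ).Nonempty := by
      rcases Set.eq_empty_or_nonempty (msupp μ) with he | hne
      · rw [hD_def, he, diam_empty] at hD0
        exact absurd hD0 (lt_irrefl 0)
      · exact hne
    set R₀ : ℝ := min c₁ D with hR₀_def
    have hR₀0 : 0 < R₀ := lt_min hc₁ hD0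
    have hineq : ∀ r : ℝ, 0 < r → r ≤ R₀ → c₂ * CF * R₀ ^ s' * r ^ (T - s') ≤ 1 := by
      intro r hr0 hrR₀
      have h1 := hs' x₀ hx₀ r R₀ hr0 hrR₀ (min_le_left _ _)
      have h2 : CF * r ^ T ≤ (μ (ball x₀ r)).toReal := by
        have h2a := hFro x₀ hx₀ r hr0 (le_trans hrR₀ (min_le_right _ _))
        have h2b := ENNReal.toReal_mono (measure_ne_top μ _) h2a
        rwa [ENNReal.toReal_ofReal (by positivity)] at h2b
      have h4 : (μ (ball x₀ R₀)).toReal ≤ 1 := by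
        have := ENNReal.toReal_mono (by norm_num : (1:ℝ≥0∞) ≠ ∞)
          (prob_le_one (μ := μ) (s := ball x₀ R₀))
        rwa [ENNReal.toReal_one] at this
      have h5 : c₂ * (R₀/r) ^ s' * (CF * r ^ T) ≤ 1 := by
        calc c₂ * (R₀/r) ^ s' * (CF * r ^ T)
            ≤ c₂ * (R₀/r) ^ s' * (μ (ball x₀ r)).toReal := by
              apply mul_le_mul_of_nonneg_left h2
              positivity
          _ ≤ (μ (ball x₀ R₀)).toReal := h1
          _ ≤ 1 := h4
      have hrs'ne : r ^ s' ≠ 0 := ne_of_gt (Real.rpow_pos_of_pos hr0 _)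
      have h6 : c₂ * (R₀/r) ^ s' * (CF * r ^ T) = c₂ * CF * R₀ ^ s' * r ^ (T - s') := by
        rw [Real.div_rpow (le_of_lt hR₀0) (le_of_lt hr0), Real.rpow_sub hr0]
        field_simp
      rwa [h6] at h5
    have hA0 : 0 < c₂ * CF * R₀ ^ s' := by positivity
    set B : ℝ := min (c₂ * CF * R₀ ^ s' / 2) 1 with hB_def
    have hB0 : 0 < B := lt_min (by positivity) one_pos
    have hsT : 0 < s' - T := by linarith
    set r : ℝ := min R₀ (B ^ (1/(s'-T))) with hr_def
    have hr0 : 0 < r := lt_min hR₀0 (Real.rpow_pos_of_pos hB0 _)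
    have hrR₀ : r ≤ R₀ := min_le_left _ _
    have hrpow : r ^ (s'-T) ≤ B := by
      calc r ^ (s'-T) ≤ (B ^ (1/(s'-T))) ^ (s'-T) :=
            Real.rpow_le_rpow (le_of_lt hr0) (min_le_right _ _) (le_of_lt hsT)
        _ = B := by
            rw [← Real.rpow_mul (le_of_lt hB0), one_div_mul_cancel (ne_of_gt hsT), Real.rpow_one]
    have h7 := hineq r hr0 hrR₀
    have h8 : r ^ (T - s') = (r ^ (s'-T))⁻¹ := by
      rw [← Real.rpow_neg (le_of_lt hr0)]
      congr 1
      ring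
    have h9 : c₂ * CF * R₀ ^ s' * (r ^ (s'-T))⁻¹ ≤ 1 := by rwa [h8] at h7
    have h10 : 0 < r ^ (s'-T) := Real.rpow_pos_of_pos hr0 _
    have h11 : c₂ * CF * R₀ ^ s' ≤ r ^ (s'-T) := by
      rw [← div_eq_mul_inv] at h9
      exact (div_le_one h10).mp h9
    have h13 : B ≤ c₂ * CF * R₀ ^ s' / 2 := min_le_left _ _
    linarith
  have hbdd : BddAbove (lowerASet μ) := ⟨T, fun s' hs' => hub s' hs'⟩
  constructor
  · calc (0:ℝ) < s := hs0
      _ ≤ dimL μ := le_csSup hbdd hmem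
  · refine ⟨c, γ, hc0, hc1, hγ0, ?_⟩
    intro x hx R hR0 hRD
    have hballsub : ball x (c*R) ⊆ ball x R := ball_subset_ball (by nlinarith)
    have hann := hAnn x hx R hR0 hRD
    have hdiff : μ (ball x R \ ball x (c*R)) = μ (ball x R) - μ (ball x (c*R)) :=
      measure_diff hballsub measurableSet_ball.nullMeasurableSet (measure_ne_top μ _)
    rw [hdiff]
    have hsum' : ENNReal.ofReal γ * μ (ball x R) + μ (ball x (c*R)) ≤ μ (ball x R) := by
      calc ENNReal.ofReal γ * μ (ball x R) + μ (ball x (c*R))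
          ≤ ENNReal.ofReal γ * μ (ball x R) + ENNReal.ofReal (1-γ) * μ (ball x R) :=
            add_le_add_right hann _
        _ = (ENNReal.ofReal γ + ENNReal.ofReal (1-γ)) * μ (ball x R) := (add_mul _ _ _).symm
        _ = μ (ball x R) := by
            rw [← ENNReal.ofReal_add (le_of_lt hγ0) (by linarith)]
            norm_num
    exact ENNReal.le_sub_of_add_le_right (measure_ne_top μ _) hsum'
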